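/- On {0 < u₂ < κ < u₁} with canonical Poisson bracket in (u₁,u₂,p_{u₁},p_{u₂}), define the Kepler Hamiltonian 2H = I₁ = [(u₁²−κ²)(p_{u₁}² + αu₁/(u₁²−κ²))]/(u₁²−u₂²) + [(u₂²−κ²)(p_{u₂}² + αu₂/(u₂²−κ²))]/(u₂²−u₁²). Then H Poisson-commutes with the additional first integral C = (u₁²−κ²)(u₂²−κ²)(p_{u₁}−p_{u₂})²/(u₁−u₂)². -/

import Mathlib

/-- Canonical Poisson bracket on phase space ℝ⁴ with coordinates
(u₁, u₂, p₁, p₂):  {F,G} = Σᵢ (∂F/∂uᵢ ∂G/∂pᵢ − ∂F/∂pᵢ ∂G/∂uᵢ). -/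
noncomputable def pb (F G : ℝ × ℝ × ℝ × ℝ → ℝ) (z : ℝ × ℝ × ℝ × ℝ) : ℝ :=
  fderiv ℝ F z (1, 0, 0, 0) * fderiv ℝ G z (0, 0, 1, 0)
  - fderiv ℝ F z (0, 0, 1, 0) * fderiv ℝ G z (1, 0, 0, 0)
  + fderiv ℝ F z (0, 1, 0, 0) * fderiv ℝ G z (0, 0, 0, 1)
  - fderiv ℝ F z (0, 0, 0, 1) * fderiv ℝ G z (0, 1, 0, 0)

private lemma hasFDerivAt_sq {f : ℝ×ℝ×ℝ×ℝ → ℝ} {f' : ℝ×ℝ×ℝ×ℝ →L[ℝ] ℝ}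
    {x : ℝ×ℝ×ℝ×ℝ} (hf : HasFDerivAt f f' x) :
    HasFDerivAt (fun y => f y ^ 2) ((2 * f x) • f') x := by
  have h := hf.mul hf
  have : (2 * f x) • f' = f x • f' + f x • f' := by
    rw [two_mul, add_smul]
  rw [this]
  simpa [pow_two, Pi.mul_def] using h

private lemma HasFDerivAt.div' {f g : ℝ×ℝ×ℝ×ℝ → ℝ} {f' g' : ℝ×ℝ×ℝ×ℝ →L[ℝ] ℝ}
    {x : ℝ×ℝ×ℝ×ℝ} (hf : HasFDerivAt f f' x) (hg : HasFDerivAt g g' x)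
    (h : g x ≠ 0) :
    HasFDerivAt (fun y => f y / g y)
      (-(f x • (g x ^ 2)⁻¹ • g') + (g x)⁻¹ • f') x := by
  simpa [div_eq_mul_inv, Function.comp_def, Pi.mul_def] using
    hf.mul ((hasDerivAt_inv h).comp_hasFDerivAt x hg)

set_option maxHeartbeats 1600000 in
/-- The Kepler Hamiltonian in elliptic coordinates Poisson-commutes with
Euler's additional first integral C on {0 < u₂ < κ < u₁}. -/
theorem stmt_11 (α κ : ℝ) (hκ : 0 < κ) :
    ∀ z : ℝ × ℝ × ℝ × ℝ, 0 < z.2.1 → z.2.1 < κ → κ < z.1 →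
      pb (fun z => ((z.1 ^ 2 - κ ^ 2) * (z.2.2.1 ^ 2 + α * z.1 / (z.1 ^ 2 - κ ^ 2)))
              / (z.1 ^ 2 - z.2.1 ^ 2) / 2
            + ((z.2.1 ^ 2 - κ ^ 2) * (z.2.2.2 ^ 2 + α * z.2.1 / (z.2.1 ^ 2 - κ ^ 2)))
              / (z.2.1 ^ 2 - z.1 ^ 2) / 2)
         (fun z => (z.1 ^ 2 - κ ^ 2) * (z.2.1 ^ 2 - κ ^ 2)
            * (z.2.2.1 - z.2.2.2) ^ 2 / (z.1 - z.2.1) ^ 2) z = 0 := by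
  rintro ⟨u1, u2, p1, p2⟩ h0 h2 h1
  dsimp only at h0 h2 h1
  have hA : u1 ^ 2 - κ ^ 2 ≠ 0 := by nlinarith
  have hB : u2 ^ 2 - κ ^ 2 ≠ 0 := by nlinarith
  have hC : u1 ^ 2 - u2 ^ 2 ≠ 0 := by nlinarith
  have hD : u2 ^ 2 - u1 ^ 2 ≠ 0 := by nlinarith
  have hE : u1 - u2 ≠ 0 := by nlinarith
  have hE2 : (u1 - u2) ^ 2 ≠ 0 := pow_ne_zero 2 hE
  have h₁ : HasFDerivAt (fun z : ℝ×ℝ×ℝ×ℝ => z.1)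
      (ContinuousLinearMap.fst ℝ ℝ (ℝ×ℝ×ℝ)) (u1,u2,p1,p2) := hasFDerivAt_fst
  have hs : HasFDerivAt (fun z : ℝ×ℝ×ℝ×ℝ => z.2)
      (ContinuousLinearMap.snd ℝ ℝ (ℝ×ℝ×ℝ)) (u1,u2,p1,p2) := hasFDerivAt_snd
  have h₂ : HasFDerivAt (fun z : ℝ×ℝ×ℝ×ℝ => z.2.1)
      ((ContinuousLinearMap.fst ℝ ℝ (ℝ×ℝ)).comp (ContinuousLinearMap.snd ℝ ℝ (ℝ×ℝ×ℝ)))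
      (u1,u2,p1,p2) := hasFDerivAt_fst.comp _ hs
  have hss : HasFDerivAt (fun z : ℝ×ℝ×ℝ×ℝ => z.2.2)
      ((ContinuousLinearMap.snd ℝ ℝ (ℝ×ℝ)).comp (ContinuousLinearMap.snd ℝ ℝ (ℝ×ℝ×ℝ)))
      (u1,u2,p1,p2) := hasFDerivAt_snd.comp _ hs
  have h₃ : HasFDerivAt (fun z : ℝ×ℝ×ℝ×ℝ => z.2.2.1)
      ((ContinuousLinearMap.fst ℝ ℝ ℝ).comp ((ContinuousLinearMap.snd ℝ ℝ (ℝ×ℝ)).comp (ContinuousLinearMap.snd ℝ ℝ (ℝ×ℝ×ℝ))))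
      (u1,u2,p1,p2) := hasFDerivAt_fst.comp _ hss
  have h₄ : HasFDerivAt (fun z : ℝ×ℝ×ℝ×ℝ => z.2.2.2)
      ((ContinuousLinearMap.snd ℝ ℝ ℝ).comp ((ContinuousLinearMap.snd ℝ ℝ (ℝ×ℝ)).comp (ContinuousLinearMap.snd ℝ ℝ (ℝ×ℝ×ℝ))))
      (u1,u2,p1,p2) := hasFDerivAt_snd.comp _ hss
  have hF : HasFDerivAt (𝕜 := ℝ) (fun z : ℝ×ℝ×ℝ×ℝ =>
      ((z.1 ^ 2 - κ ^ 2) * (z.2.2.1 ^ 2 + α * z.1 / (z.1 ^ 2 - κ ^ 2)))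
        / (z.1 ^ 2 - z.2.1 ^ 2) / 2
      + ((z.2.1 ^ 2 - κ ^ 2) * (z.2.2.2 ^ 2 + α * z.2.1 / (z.2.1 ^ 2 - κ ^ 2)))
        / (z.2.1 ^ 2 - z.1 ^ 2) / 2) _ (u1,u2,p1,p2) :=
    (((((hasFDerivAt_sq h₁).sub_const (κ^2)).mul ((hasFDerivAt_sq h₃).add
        (HasFDerivAt.div' (h₁.const_mul α) ((hasFDerivAt_sq h₁).sub_const (κ^2)) hA))).div'
        ((hasFDerivAt_sq h₁).sub (hasFDerivAt_sq h₂)) hC).div' (hasFDerivAt_const 2 _) two_ne_zero).add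
      (((((hasFDerivAt_sq h₂).sub_const (κ^2)).mul ((hasFDerivAt_sq h₄).add
        (HasFDerivAt.div' (h₂.const_mul α) ((hasFDerivAt_sq h₂).sub_const (κ^2)) hB))).div'
        ((hasFDerivAt_sq h₂).sub (hasFDerivAt_sq h₁)) hD).div' (hasFDerivAt_const 2 _) two_ne_zero)
  have hG : HasFDerivAt (𝕜 := ℝ) (fun z : ℝ×ℝ×ℝ×ℝ =>
      (z.1 ^ 2 - κ ^ 2) * (z.2.1 ^ 2 - κ ^ 2) * (z.2.2.1 - z.2.2.2) ^ 2
        / (z.1 - z.2.1) ^ 2) _ (u1,u2,p1,p2) :=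
    ((((hasFDerivAt_sq h₁).sub_const (κ^2)).mul ((hasFDerivAt_sq h₂).sub_const (κ^2))).mul
        (hasFDerivAt_sq (h₃.sub h₄))).div' (hasFDerivAt_sq (h₁.sub h₂)) hE2
  have eF := hF.fderiv
  have eG := hG.fderiv
  rw [pb, eF, eG]
  simp only [ContinuousLinearMap.add_apply, ContinuousLinearMap.sub_apply,
    ContinuousLinearMap.smul_apply, ContinuousLinearMap.comp_apply,
    ContinuousLinearMap.coe_fst', ContinuousLinearMap.coe_snd',
    ContinuousLinearMap.neg_apply, ContinuousLinearMap.coe_smul', Pi.smul_apply,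
    ContinuousLinearMap.zero_apply, smul_eq_mul, Pi.mul_apply, Pi.add_apply, Pi.sub_apply]
  simp only [mul_zero, zero_mul, mul_one, sub_zero, zero_sub, add_zero, zero_add,
    neg_zero, mul_neg, neg_neg, sub_self]
  have dFu1 : (2⁻¹ *
                (-((u1 ^ 2 - κ ^ 2) * (p1 ^ 2 + α * u1 / (u1 ^ 2 - κ ^ 2)) * (((u1 ^ 2 - u2 ^ 2) ^ 2)⁻¹ * (2 * u1))) +
                  (u1 ^ 2 - u2 ^ 2)⁻¹ *
                    ((u1 ^ 2 - κ ^ 2) * (-(α * u1 * (((u1 ^ 2 - κ ^ 2) ^ 2)⁻¹ * (2 * u1))) + (u1 ^ 2 - κ ^ 2)⁻¹ * α) +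
                      (p1 ^ 2 + α * u1 / (u1 ^ 2 - κ ^ 2)) * (2 * u1))) +
              2⁻¹ *
                ((u2 ^ 2 - κ ^ 2) * (p2 ^ 2 + α * u2 / (u2 ^ 2 - κ ^ 2)) * (((u2 ^ 2 - u1 ^ 2) ^ 2)⁻¹ * (2 * u1))))
      = (2*u1*p1^2+α)/(2*(u1^2-u2^2)) - ((u1^2-κ^2)*p1^2+α*u1)*u1/(u1^2-u2^2)^2
        + ((u2^2-κ^2)*p2^2+α*u2)*u1/(u1^2-u2^2)^2 := by
    field_simp
    ring
  have dFu2 : (2⁻¹ * ((u1 ^ 2 - κ ^ 2) * (p1 ^ 2 + α * u1 / (u1 ^ 2 - κ ^ 2)) * (((u1 ^ 2 - u2 ^ 2) ^ 2)⁻¹ * (2 * u2))) +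
              2⁻¹ *
                (-((u2 ^ 2 - κ ^ 2) * (p2 ^ 2 + α * u2 / (u2 ^ 2 - κ ^ 2)) * (((u2 ^ 2 - u1 ^ 2) ^ 2)⁻¹ * (2 * u2))) +
                  (u2 ^ 2 - u1 ^ 2)⁻¹ *
                    ((u2 ^ 2 - κ ^ 2) * (-(α * u2 * (((u2 ^ 2 - κ ^ 2) ^ 2)⁻¹ * (2 * u2))) + (u2 ^ 2 - κ ^ 2)⁻¹ * α) +
                      (p2 ^ 2 + α * u2 / (u2 ^ 2 - κ ^ 2)) * (2 * u2))))
      = ((u1^2-κ^2)*p1^2+α*u1)*u2/(u1^2-u2^2)^2 - (2*u2*p2^2+α)/(2*(u1^2-u2^2))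
        - ((u2^2-κ^2)*p2^2+α*u2)*u2/(u1^2-u2^2)^2 := by
    field_simp
    ring
  have dFp1 : 2⁻¹ * ((u1 ^ 2 - u2 ^ 2)⁻¹ * ((u1 ^ 2 - κ ^ 2) * (2 * p1)))
      = (u1^2-κ^2)*p1/(u1^2-u2^2) := by
    field_simp
  have dFp2 : 2⁻¹ * ((u2 ^ 2 - u1 ^ 2)⁻¹ * ((u2 ^ 2 - κ ^ 2) * (2 * p2)))
      = -((u2^2-κ^2)*p2/(u1^2-u2^2)) := by
    rw [show u2 ^ 2 - u1 ^ 2 = -(u1 ^ 2 - u2 ^ 2) by ring]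
    field_simp
  have dGu1 : (-((u1 ^ 2 - κ ^ 2) * (u2 ^ 2 - κ ^ 2) * (p1 - p2) ^ 2 * ((((u1 - u2) ^ 2) ^ 2)⁻¹ * (2 * (u1 - u2)))) +
              ((u1 - u2) ^ 2)⁻¹ * ((p1 - p2) ^ 2 * ((u2 ^ 2 - κ ^ 2) * (2 * u1))))
      = 2*u1*(u2^2-κ^2)*(p1-p2)^2/(u1-u2)^2
        - 2*(u1^2-κ^2)*(u2^2-κ^2)*(p1-p2)^2/(u1-u2)^3 := by
    have hE3 : (u1 - u2) ^ 3 ≠ 0 := pow_ne_zero 3 hE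
    field_simp
    ring
  have dGu2 : ((u1 ^ 2 - κ ^ 2) * (u2 ^ 2 - κ ^ 2) * (p1 - p2) ^ 2 * ((((u1 - u2) ^ 2) ^ 2)⁻¹ * (2 * (u1 - u2))) +
              ((u1 - u2) ^ 2)⁻¹ * ((p1 - p2) ^ 2 * ((u1 ^ 2 - κ ^ 2) * (2 * u2))))
      = 2*u2*(u1^2-κ^2)*(p1-p2)^2/(u1-u2)^2
        + 2*(u1^2-κ^2)*(u2^2-κ^2)*(p1-p2)^2/(u1-u2)^3 := by
    have hE3 : (u1 - u2) ^ 3 ≠ 0 := pow_ne_zero 3 hE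
    field_simp
    ring
  have dGp1 : ((u1 - u2) ^ 2)⁻¹ * ((u1 ^ 2 - κ ^ 2) * (u2 ^ 2 - κ ^ 2) * (2 * (p1 - p2)))
      = 2*(u1^2-κ^2)*(u2^2-κ^2)*(p1-p2)/(u1-u2)^2 := by
    field_simp
  rw [dFu1, dFu2, dFp1, dFp2, dGu1, dGu2, dGp1]
  have hE3 : (u1 - u2) ^ 3 ≠ 0 := pow_ne_zero 3 hE
  field_simp
  ring
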